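/- Suppose the sequences a₁, …, a_ℓ : ℕ → ℤ are controlled by the invariant factor for every system. Then for every system (X, 𝒳, μ, T₁, …, T_ℓ) and every E ∈ 𝒳: (1) the limit lim_{N→∞} 𝔼_{n∈[N]} μ(E ∩ T₁^{−a₁(n)}E ∩ ⋯ ∩ T_ℓ^{−a_ℓ(n)}E) exists and is at least μ(E)^{ℓ+1}; and (2) for every ε > 0 the set {n ∈ ℕ : μ(E ∩ T₁^{−a₁(n)}E ∩ ⋯ ∩ T_ℓ^{−a_ℓ(n)}E) ≥ μ(E)^{ℓ+1} − ε} has positive upper density. -/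

import Mathlib

open MeasureTheory Filter ENNReal Topology

/-- The group of measurable self-equivalences of `X`, with multiplication given by
composition of maps: `⇑(g * h) = ⇑g ∘ ⇑h`. -/
instance measurableEquivGroup {X : Type*} [MeasurableSpace X] : Group (X ≃ᵐ X) where
  mul g h := h.trans g
  one := MeasurableEquiv.refl X
  inv := MeasurableEquiv.symm
  mul_assoc _ _ _ := MeasurableEquiv.ext rfl
  one_mul _ := MeasurableEquiv.ext rfl
  mul_one _ := MeasurableEquiv.ext rfl
  inv_mul_cancel g := MeasurableEquiv.ext (funext fun x => g.symm_apply_apply x)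

/-- The σ-algebra `I(T)` of `T`-invariant measurable sets. -/
def invariantAlgebra {X : Type*} (m : MeasurableSpace X) (T : X → X) : MeasurableSpace X where
  MeasurableSet' s := m.MeasurableSet' s ∧ T ⁻¹' s = s
  measurableSet_empty := ⟨m.measurableSet_empty, Set.preimage_empty⟩
  measurableSet_compl s hs := ⟨m.measurableSet_compl s hs.1, by rw [Set.preimage_compl, hs.2]⟩
  measurableSet_iUnion f hf := ⟨m.measurableSet_iUnion f fun i => (hf i).1, by
    rw [Set.preimage_iUnion]; exact Set.iUnion_congr fun i => (hf i).2⟩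

/-- Upper density of a set of positive integers. -/
noncomputable def upperDensityNat (B : Set ℕ) : ℝ :=
  Filter.limsup (fun N : ℕ => (Nat.card {n : ℕ // n ∈ B ∧ 1 ≤ n ∧ n ≤ N} : ℝ) / (N : ℝ))
    Filter.atTop

/-- The sequences `a 1, …, a l` are controlled by the invariant factor for the system given by
the commuting measure-preserving transformations `T 1, …, T l`: the multiple ergodic averages
converge in `L²(μ)` to the product of the conditional expectations on the invariant factors. -/
def InvariantFactorControlled {X : Type*} [m : MeasurableSpace X] (μ : Measure X) {l : ℕ}
    (T : Fin l → X ≃ᵐ X) (a : Fin l → ℕ → ℤ) : Prop :=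
  ∀ f : Fin l → X → ℝ, (∀ j, Measurable (f j)) → (∀ j, ∃ C, ∀ x, |f j x| ≤ C) →
    Tendsto (fun N : ℕ => eLpNorm (fun x =>
        (N : ℝ)⁻¹ * ∑ n ∈ Finset.Icc 1 N, ∏ j, f j ((T j ^ a j n) x)
          - ∏ j, (μ[f j | invariantAlgebra m ⇑(T j)]) x) 2 μ) atTop (𝓝 0)



/-- Chu's lemma: `∫ f ∏ E(f|𝒜ⱼ) ≥ (∫f)^{l+1}` for `f` the indicator of `E`. -/
lemma chu_lemma {X : Type*} [m0 : MeasurableSpace X] (μ : Measure X) [IsProbabilityMeasure μ]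
    {l : ℕ} (m : Fin l → MeasurableSpace X) (hm : ∀ j, m j ≤ m0)
    {E : Set X} (hE : MeasurableSet E) :
    μ E ^ (l + 1) ≤
      ∫⁻ x, ENNReal.ofReal (E.indicator (1 : X → ℝ) x) *
        ∏ j, ENNReal.ofReal ((μ[E.indicator (1 : X → ℝ) | m j]) x) ∂μ := by
  classical
  set f : X → ℝ := E.indicator (1 : X → ℝ) with hf_def
  have hfmeas : Measurable f := measurable_one.indicator hE
  have hf01 : ∀ x, f x = 0 ∨ f x = 1 := by
    intro x
    by_cases hx : x ∈ E
    · right; simp [hf_def, hx]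
    · left; simp [hf_def, hx]
  have hfnn : ∀ x, 0 ≤ f x := by
    intro x; rcases hf01 x with h | h <;> simp [h]
  have hfbd : ∀ x, |f x| ≤ 1 := by
    intro x; rcases hf01 x with h | h <;> simp [h]
  have hfi : Integrable f μ :=
    ⟨hfmeas.aestronglyMeasurable, HasFiniteIntegral.of_bounded (C := 1)
      (Filter.Eventually.of_forall (fun x => by simpa using hfbd x))⟩
  set g : Fin l → X → ℝ := fun j => μ[f | m j] with hg_def
  have hgsm : ∀ j, StronglyMeasurable[m j] (g j) := fun j => stronglyMeasurable_condExp
  have hgnn : ∀ j, 0 ≤ᵐ[μ] g j := fun j =>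
    condExp_nonneg (Filter.Eventually.of_forall hfnn)
  set F : X → ℝ≥0∞ := fun x => ENNReal.ofReal (f x) with hF_def
  set G : Fin l → X → ℝ≥0∞ := fun j x => ENNReal.ofReal (g j x) with hG_def
  have hFmeas : Measurable F := ENNReal.measurable_ofReal.comp hfmeas
  have hGmeas : ∀ j, Measurable (G j) := fun j =>
    ENNReal.measurable_ofReal.comp ((hgsm j).measurable.mono (hm j) le_rfl)
  have hGmeas' : ∀ j, Measurable[m j] (G j) := fun j =>
    ENNReal.measurable_ofReal.comp (hgsm j).measurable
  have hFle : ∀ x, F x ≤ 1 := by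
    intro x; rcases hf01 x with h | h <;> simp [hF_def, h]
  have hFtop : ∀ x, F x ≠ ⊤ := fun x => ENNReal.ofReal_ne_top
  have hGtop : ∀ j x, G j x ≠ ⊤ := fun j x => ENNReal.ofReal_ne_top
  -- the key identity of measures on `m j`
  have keym : ∀ j, (μ.withDensity F).trim (hm j) = (μ.withDensity (G j)).trim (hm j) := by
    intro j
    haveI : SigmaFinite (μ.trim (hm j)) := by infer_instance
    refine @Measure.ext X (m j) _ _ (fun s hs => ?_)
    rw [trim_measurableSet_eq (hm j) hs, trim_measurableSet_eq (hm j) hs,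
      withDensity_apply _ ((hm j) s hs), withDensity_apply _ ((hm j) s hs)]
    have h1 : ∫⁻ x in s, F x ∂μ = ENNReal.ofReal (∫ x in s, f x ∂μ) :=
      (ofReal_integral_eq_lintegral_ofReal hfi.integrableOn
        (ae_restrict_of_ae (Filter.Eventually.of_forall hfnn))).symm
    have h2 : ∫⁻ x in s, G j x ∂μ = ENNReal.ofReal (∫ x in s, g j x ∂μ) :=
      (ofReal_integral_eq_lintegral_ofReal integrable_condExp.integrableOn
        (ae_restrict_of_ae (hgnn j))).symm
    rw [h1, h2, setIntegral_condExp (hm j) hfi hs]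
  have keyint : ∀ j (H : X → ℝ≥0∞), Measurable[m j] H →
      ∫⁻ x, F x * H x ∂μ = ∫⁻ x, G j x * H x ∂μ := by
    intro j H hH
    have hHm0 : Measurable H := hH.mono (hm j) le_rfl
    calc ∫⁻ x, F x * H x ∂μ = ∫⁻ x, H x ∂(μ.withDensity F) :=
          (lintegral_withDensity_eq_lintegral_mul μ hFmeas hHm0).symm
      _ = ∫⁻ x, H x ∂((μ.withDensity F).trim (hm j)) := (lintegral_trim _ hH).symm
      _ = ∫⁻ x, H x ∂((μ.withDensity (G j)).trim (hm j)) := by rw [keym j]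
      _ = ∫⁻ x, H x ∂(μ.withDensity (G j)) := lintegral_trim _ hH
      _ = ∫⁻ x, G j x * H x ∂μ := lintegral_withDensity_eq_lintegral_mul μ (hGmeas j) hHm0
  -- a.e., F x ≠ 0 → all G j x ≠ 0
  have hae : ∀ j, ∀ᵐ x ∂μ, F x ≠ 0 → G j x ≠ 0 := by
    intro j
    haveI : SigmaFinite (μ.trim (hm j)) := by infer_instance
    set s : Set X := {x | g j x ≤ 0} with hs_def
    have hsm : MeasurableSet[m j] s := measurableSet_le (hgsm j).measurable measurable_const
    have hsm0 : MeasurableSet s := hm j s hsm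
    have h1 : ∫ x in s, f x ∂μ = ∫ x in s, g j x ∂μ := (setIntegral_condExp (hm j) hfi hsm).symm
    have h2 : ∫ x in s, g j x ∂μ ≤ 0 := by
      apply setIntegral_nonpos hsm0
      intro x hx; exact hx
    have h3 : ∫ x in s, f x ∂μ = (μ (E ∩ s)).toReal := by
      rw [hf_def, integral_indicator_one hE, measureReal_restrict_apply hE, measureReal_def]
    have h4 : μ (E ∩ s) = 0 := by
      by_contra hne
      have : 0 < (μ (E ∩ s)).toReal := ENNReal.toReal_pos hne (measure_ne_top μ _)
      rw [h3] at h1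
      linarith [h1 ▸ h2]
    have h5 : ∀ᵐ x ∂μ, x ∉ E ∩ s := (measure_eq_zero_iff_ae_notMem).mp h4
    filter_upwards [h5] with x hx hFx
    have hxE : x ∈ E := by
      by_contra hxE
      exact hFx (by simp [hF_def, hf_def, hxE])
    have hxs : x ∉ s := fun h => hx ⟨hxE, h⟩
    have : 0 < g j x := lt_of_not_ge hxs
    simp [hG_def, ENNReal.ofReal_eq_zero, not_le, this]
  -- the functions in Hölder's inequality
  set W : Fin (l + 1) → X → ℝ≥0∞ := Fin.cons (fun x => F x * ∏ j, G j x)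
      (fun j x => F x * ({y | G j y ≠ 0}.indicator (fun y => (G j y)⁻¹) x)) with hW_def
  set p : ℝ := 1 / (l + 1) with hp_def
  have hppos : 0 < p := by positivity
  have hWmeas : ∀ i, Measurable (W i) := by
    intro i
    refine Fin.cases ?_ ?_ i
    · exact hFmeas.mul (Finset.measurable_prod _ fun j _ => hGmeas j)
    · intro j
      exact hFmeas.mul (Measurable.indicator (hGmeas j).inv
        ((hGmeas j) (measurableSet_singleton 0)).compl)
  have hHj : ∀ j, Measurable[m j] ({y | G j y ≠ 0}.indicator (fun y => (G j y)⁻¹)) := by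
    intro j
    exact Measurable.indicator (hGmeas' j).inv (((hGmeas' j) (measurableSet_singleton 0)).compl)
  -- pointwise a.e. bound
  have hptwise : ∀ᵐ x ∂μ, F x ≤ ∏ i, W i x ^ p := by
    have := ae_all_iff.mpr hae
    filter_upwards [this] with x hx
    by_cases hFx : F x = 0
    · simp [hFx]
    · have hFx1 : F x = 1 := by
        rcases hf01 x with h | h
        · exact absurd (by simp [hF_def, h]) hFx
        · simp [hF_def, h]
      have hGx : ∀ j, G j x ≠ 0 := fun j => hx j hFx
      have : ∏ i, W i x ^ p = 1 := by
        rw [Fin.prod_univ_succ]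
        have hW0 : W 0 x = ∏ j, G j x := by simp [hW_def, hFx1]
        have hWs : ∀ j : Fin l, W j.succ x = (G j x)⁻¹ := by
          intro j
          simp only [hW_def, Fin.cons_succ, hFx1, one_mul]
          exact Set.indicator_of_mem (show x ∈ {y | G j y ≠ 0} from hGx j) _
        have h2 : ∏ j : Fin l, W j.succ x ^ p = ∏ j : Fin l, ((G j x)⁻¹) ^ p :=
          Finset.prod_congr rfl (fun j _ => by rw [hWs j])
        rw [hW0, h2, ← ENNReal.prod_rpow_of_ne_top (fun j _ => hGtop j x),
          ← Finset.prod_mul_distrib]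
        apply Finset.prod_eq_one
        intro j _
        rw [← ENNReal.mul_rpow_of_nonneg _ _ hppos.le,
          ENNReal.mul_inv_cancel (hGx j) (hGtop j x), ENNReal.one_rpow]
      rw [this, hFx1]
  -- Hölder
  have hsum : ∑ _i : Fin (l + 1), p = 1 := by
    simp [hp_def]
    field_simp
  have holder := ENNReal.lintegral_prod_norm_pow_le (μ := μ) Finset.univ
    (f := fun i x => W i x) (fun i _ => (hWmeas i).aemeasurable)
    (p := fun _ => p) hsum (fun i _ => hppos.le)
  have hFint : ∫⁻ x, F x ∂μ = μ E := by
    have : ∀ x, F x = E.indicator (fun _ => (1 : ℝ≥0∞)) x := by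
      intro x
      by_cases hx : x ∈ E <;> simp [hF_def, hf_def, hx]
    rw [lintegral_congr this, lintegral_indicator hE]
    simp
  have hW0int : ∫⁻ x, W 0 x ∂μ = ∫⁻ x, F x * ∏ j, G j x ∂μ := by
    apply lintegral_congr; intro x; simp [hW_def]
  have hWsint : ∀ j : Fin l, ∫⁻ x, W j.succ x ∂μ ≤ 1 := by
    intro j
    have h1 : ∫⁻ x, W j.succ x ∂μ
        = ∫⁻ x, G j x * ({y | G j y ≠ 0}.indicator (fun y => (G j y)⁻¹) x) ∂μ := by
      rw [← keyint j _ (hHj j)]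
      apply lintegral_congr; intro x; simp [hW_def]
    have h2 : ∀ x, G j x * ({y | G j y ≠ 0}.indicator (fun y => (G j y)⁻¹) x)
        = {y | G j y ≠ 0}.indicator (fun _ => (1 : ℝ≥0∞)) x := by
      intro x
      by_cases hx : G j x ≠ 0
      · rw [Set.indicator_of_mem (show x ∈ {y | G j y ≠ 0} from hx) _,
          Set.indicator_of_mem (show x ∈ {y | G j y ≠ 0} from hx) _,
          ENNReal.mul_inv_cancel hx (hGtop j x)]
      · push_neg at hx
        have hx' : x ∉ {y | G j y ≠ 0} := by simp [hx]
        rw [Set.indicator_of_notMem hx' _, Set.indicator_of_notMem hx' _, mul_zero]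
    rw [h1, lintegral_congr h2, lintegral_indicator, lintegral_const]
    · calc (1 : ℝ≥0∞) * μ.restrict {y | G j y ≠ 0} Set.univ ≤ μ Set.univ := by
            rw [one_mul]; exact (Measure.restrict_apply_le _ _).trans le_rfl
        _ = 1 := measure_univ
    · exact ((hGmeas j) (measurableSet_singleton 0)).compl
  -- put together
  have hmain : μ E ≤ (∫⁻ x, F x * ∏ j, G j x ∂μ) ^ p := by
    calc μ E = ∫⁻ x, F x ∂μ := hFint.symm
      _ ≤ ∫⁻ x, ∏ i, W i x ^ p ∂μ := lintegral_mono_ae hptwise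
      _ ≤ ∏ i, (∫⁻ x, W i x ∂μ) ^ p := holder
      _ = (∫⁻ x, W 0 x ∂μ) ^ p * ∏ j : Fin l, (∫⁻ x, W j.succ x ∂μ) ^ p :=
          Fin.prod_univ_succ _
      _ ≤ (∫⁻ x, F x * ∏ j, G j x ∂μ) ^ p * 1 := by
          rw [hW0int]
          gcongr
          apply Finset.prod_le_one (fun j _ => zero_le)
          intro j _
          exact ENNReal.rpow_le_one (hWsint j) hppos.le
      _ = (∫⁻ x, F x * ∏ j, G j x ∂μ) ^ p := mul_one _
  calc μ E ^ (l + 1) ≤ ((∫⁻ x, F x * ∏ j, G j x ∂μ) ^ p) ^ (l + 1) := by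
        exact pow_le_pow_left' hmain _
    _ = ∫⁻ x, F x * ∏ j, G j x ∂μ := by
        rw [← ENNReal.rpow_natCast (_ ^ p) (l + 1), ← ENNReal.rpow_mul, hp_def,
          show (1 : ℝ) / (l + 1) * ((l + 1 : ℕ) : ℝ) = 1 by push_cast; field_simp]
        exact ENNReal.rpow_one _

universe u

/-- **Lower bounds for multiple recurrence.** If the sequences `a 1, …, a ℓ` are controlled by
the invariant factor for every system, then for every system and every measurable set `E`,
the averages of `μ(E ∩ T₁^{-a₁(n)}E ∩ ⋯ ∩ T_ℓ^{-a_ℓ(n)}E)` converge to a limit `≥ μ(E)^{ℓ+1}`,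
and for every `ε > 0` the set of `n` with
`μ(E ∩ T₁^{-a₁(n)}E ∩ ⋯ ∩ T_ℓ^{-a_ℓ(n)}E) ≥ μ(E)^{ℓ+1} - ε` has positive upper density. -/
theorem recurrence_lower_bounds_of_invariant_control {ℓ : ℕ} (a : Fin ℓ → ℕ → ℤ)
    (hcontrol : ∀ (X : Type u) (mX : MeasurableSpace X) (μ : Measure X),
      IsProbabilityMeasure μ → ∀ T : Fin ℓ → X ≃ᵐ X,
        (∀ j, MeasurePreserving (⇑(T j)) μ μ) → (∀ i j, Commute (T i) (T j)) →
          InvariantFactorControlled μ T a)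
    (X : Type u) (mX : MeasurableSpace X) (μ : Measure X) (hprob : IsProbabilityMeasure μ)
    (T : Fin ℓ → X ≃ᵐ X) (hmp : ∀ j, MeasurePreserving (⇑(T j)) μ μ)
    (hcomm : ∀ i j, Commute (T i) (T j))
    (E : Set X) (hE : MeasurableSet E) :
    (∃ L : ℝ, Tendsto (fun N : ℕ =>
        (N : ℝ)⁻¹ * ∑ n ∈ Finset.Icc 1 N,
          (μ (E ∩ ⋂ j, (⇑(T j ^ a j n)) ⁻¹' E)).toReal) atTop (𝓝 L) ∧
        (μ E).toReal ^ (ℓ + 1) ≤ L) ∧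
    (∀ ε : ℝ, 0 < ε →
      0 < upperDensityNat {n : ℕ |
        (μ E).toReal ^ (ℓ + 1) - ε ≤ (μ (E ∩ ⋂ j, (⇑(T j ^ a j n)) ⁻¹' E)).toReal}) := by
  classical
  haveI : IsProbabilityMeasure μ := hprob
  set m : Fin ℓ → MeasurableSpace X := fun j => invariantAlgebra mX ⇑(T j) with hm_def
  have hm : ∀ j, m j ≤ mX := fun j s hs => hs.1
  have hcon : Tendsto (fun N : ℕ => eLpNorm (fun x =>
      (N : ℝ)⁻¹ * ∑ n ∈ Finset.Icc 1 N, ∏ j, (E.indicator (1 : X → ℝ)) ((T j ^ a j n) x)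
        - ∏ j, (μ[E.indicator (1 : X → ℝ) | m j]) x) 2 μ) atTop (𝓝 0) := by
    have hfmeas : Measurable (E.indicator (1 : X → ℝ)) := measurable_one.indicator hE
    have hfbd : ∀ x, |E.indicator (1 : X → ℝ) x| ≤ 1 := by
      intro x
      by_cases hx : x ∈ E <;> simp [hx]
    exact hcontrol X mX μ hprob T hmp hcomm (fun _ => E.indicator (1 : X → ℝ))
      (fun _ => hfmeas) (fun _ => ⟨1, hfbd⟩)
  have hchu0 : μ E ^ (ℓ + 1) ≤
      ∫⁻ x, ENNReal.ofReal (E.indicator (1 : X → ℝ) x) *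
        ∏ j, ENNReal.ofReal ((μ[E.indicator (1 : X → ℝ) | m j]) x) ∂μ :=
    chu_lemma μ m hm hE
  classical
  set f : X → ℝ := E.indicator (1 : X → ℝ) with hf_def
  have hfmeas : Measurable f := measurable_one.indicator hE
  have hf01 : ∀ x, f x = 0 ∨ f x = 1 := by
    intro x
    by_cases hx : x ∈ E
    · right; simp [hf_def, hx]
    · left; simp [hf_def, hx]
  have hfnn : ∀ x, 0 ≤ f x := by
    intro x; rcases hf01 x with h | h <;> simp [h]
  have hfbd : ∀ x, |f x| ≤ 1 := by
    intro x; rcases hf01 x with h | h <;> simp [h]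
  have hfle1 : ∀ x, f x ≤ 1 := fun x => (abs_le.mp (hfbd x)).2
  have hfi : Integrable f μ :=
    ⟨hfmeas.aestronglyMeasurable, HasFiniteIntegral.of_bounded (C := 1)
      (Filter.Eventually.of_forall (fun x => by simpa using hfbd x))⟩
  set g : Fin ℓ → X → ℝ := fun j => μ[f | m j] with hg_def
  have hgsm : ∀ j, StronglyMeasurable[m j] (g j) := fun j => stronglyMeasurable_condExp
  have hgm0 : ∀ j, StronglyMeasurable (g j) := fun j => (hgsm j).mono (hm j)
  have hgnn : ∀ j, 0 ≤ᵐ[μ] g j := fun j =>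
    condExp_nonneg (Filter.Eventually.of_forall hfnn)
  have hgle1 : ∀ j, g j ≤ᵐ[μ] fun _ => (1 : ℝ) := by
    intro j
    have h1 : f ≤ᵐ[μ] fun _ => (1 : ℝ) := Filter.Eventually.of_forall hfle1
    have h2 := condExp_mono (m := m j) hfi (integrable_const (1 : ℝ)) h1
    rw [condExp_const (hm j) (1 : ℝ)] at h2
    exact h2
  set gg : X → ℝ := fun x => ∏ j, g j x with hgg_def
  have hggmeas : Measurable gg := Finset.measurable_prod _ fun j _ => (hgm0 j).measurable
  have hggbd : ∀ᵐ x ∂μ, 0 ≤ gg x ∧ gg x ≤ 1 := by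
    filter_upwards [ae_all_iff.mpr hgnn, ae_all_iff.mpr hgle1] with x h1 h2
    exact ⟨Finset.prod_nonneg fun j _ => h1 j,
      Finset.prod_le_one (fun j _ => h1 j) (fun j _ => h2 j)⟩
  have hggint : Integrable gg μ :=
    ⟨hggmeas.aestronglyMeasurable, HasFiniteIntegral.of_bounded (C := 1)
      (hggbd.mono fun x hx => by rw [Real.norm_eq_abs, abs_le]; constructor <;> linarith [hx.1, hx.2])⟩
  -- averages
  set A : ℕ → X → ℝ := fun N x =>
    (N : ℝ)⁻¹ * ∑ n ∈ Finset.Icc 1 N, ∏ j, f ((T j ^ a j n) x) with hA_def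
  have hAmeas : ∀ N, Measurable (A N) := fun N =>
    measurable_const.mul (Finset.measurable_sum _ fun n _ =>
      Finset.measurable_prod _ fun j _ => hfmeas.comp (T j ^ a j n).measurable)
  have hprodbd : ∀ n x, 0 ≤ ∏ j, f ((T j ^ a j n) x) ∧ ∏ j, f ((T j ^ a j n) x) ≤ 1 := by
    intro n x
    exact ⟨Finset.prod_nonneg fun j _ => hfnn _,
      Finset.prod_le_one (fun j _ => hfnn _) (fun j _ => hfle1 _)⟩
  have hAbd : ∀ N x, |A N x| ≤ 1 := by
    intro N x
    rcases Nat.eq_zero_or_pos N with hN | hN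
    · simp [hA_def, hN]
    · have h1 : |∑ n ∈ Finset.Icc 1 N, ∏ j, f ((T j ^ a j n) x)| ≤ N := by
        calc |∑ n ∈ Finset.Icc 1 N, ∏ j, f ((T j ^ a j n) x)|
            ≤ ∑ n ∈ Finset.Icc 1 N, |∏ j, f ((T j ^ a j n) x)| :=
              Finset.abs_sum_le_sum_abs _ _
          _ ≤ ∑ _n ∈ Finset.Icc 1 N, (1 : ℝ) := Finset.sum_le_sum fun n _ => by
              rw [abs_le]; exact ⟨by linarith [(hprodbd n x).1], (hprodbd n x).2⟩
          _ = N := by simp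
      have hNpos : (0 : ℝ) < N := by exact_mod_cast hN
      rw [hA_def]
      simp only
      rw [abs_mul, abs_inv, Nat.abs_cast]
      calc (N : ℝ)⁻¹ * |∑ n ∈ Finset.Icc 1 N, ∏ j, f ((T j ^ a j n) x)|
          ≤ (N : ℝ)⁻¹ * N := mul_le_mul_of_nonneg_left h1 (by positivity)
        _ = 1 := by field_simp
  have hAint : ∀ N, Integrable (A N) μ := fun N =>
    ⟨(hAmeas N).aestronglyMeasurable, HasFiniteIntegral.of_bounded (C := 1)
      (Filter.Eventually.of_forall fun x => by simpa using hAbd N x)⟩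
  set v : ℕ → ℝ := fun n => (μ (E ∩ ⋂ j, (⇑(T j ^ a j n)) ⁻¹' E)).toReal with hv_def
  have hSmeas : ∀ n, MeasurableSet (E ∩ ⋂ j, (⇑(T j ^ a j n)) ⁻¹' E) := fun n =>
    hE.inter (MeasurableSet.iInter fun j => (T j ^ a j n).measurable hE)
  have hv01 : ∀ n, 0 ≤ v n ∧ v n ≤ 1 := by
    intro n
    refine ⟨ENNReal.toReal_nonneg, ?_⟩
    have h1 : μ (E ∩ ⋂ j, (⇑(T j ^ a j n)) ⁻¹' E) ≤ 1 :=
      (measure_mono (Set.subset_univ _)).trans_eq measure_univ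
    calc v n ≤ (1 : ℝ≥0∞).toReal := ENNReal.toReal_mono one_ne_top h1
      _ = 1 := by simp
  have hkey : ∀ n x, f x * ∏ j, f ((T j ^ a j n) x)
      = (E ∩ ⋂ j, (⇑(T j ^ a j n)) ⁻¹' E).indicator (1 : X → ℝ) x := by
    intro n x
    by_cases hx : x ∈ E ∩ ⋂ j, (⇑(T j ^ a j n)) ⁻¹' E
    · rw [Set.indicator_of_mem hx]
      obtain ⟨hxE, hxI⟩ := hx
      rw [Set.mem_iInter] at hxI
      have h1 : f x = 1 := by simp [hf_def, hxE]
      have h2 : ∀ j, f ((T j ^ a j n) x) = 1 := fun j =>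
        Set.indicator_of_mem (hxI j) (1 : X → ℝ)
      rw [h1, Finset.prod_congr rfl (fun j _ => h2 j)]
      simp
    · rw [Set.indicator_of_notMem hx]
      by_cases hxE : x ∈ E
      · have h : ¬ ∀ j, x ∈ (⇑(T j ^ a j n)) ⁻¹' E := fun h2 => hx ⟨hxE, Set.mem_iInter.mpr h2⟩
        push_neg at h
        obtain ⟨j, hj⟩ := h
        have hz : f ((T j ^ a j n) x) = 0 :=
          Set.indicator_of_notMem hj (1 : X → ℝ)
        rw [Finset.prod_eq_zero (Finset.mem_univ j) hz, mul_zero]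
      · have hz : f x = 0 := by simp [hf_def, hxE]
        rw [hz, zero_mul]
  have hintn : ∀ n, Integrable (fun x => f x * ∏ j, f ((T j ^ a j n) x)) μ := by
    intro n
    rw [show (fun x => f x * ∏ j, f ((T j ^ a j n) x))
      = (E ∩ ⋂ j, (⇑(T j ^ a j n)) ⁻¹' E).indicator (1 : X → ℝ) from funext (hkey n)]
    exact (integrable_const (1 : ℝ)).indicator (hSmeas n)
  have hveq : ∀ n, ∫ x, f x * ∏ j, f ((T j ^ a j n) x) ∂μ = v n := by
    intro n
    rw [show (fun x => f x * ∏ j, f ((T j ^ a j n) x))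
      = (E ∩ ⋂ j, (⇑(T j ^ a j n)) ⁻¹' E).indicator (1 : X → ℝ) from funext (hkey n)]
    rw [integral_indicator_one (hSmeas n)]; rfl
  have havg : ∀ N, ∫ x, f x * A N x ∂μ = (N : ℝ)⁻¹ * ∑ n ∈ Finset.Icc 1 N, v n := by
    intro N
    have h1 : ∀ x, f x * A N x
        = (N : ℝ)⁻¹ * ∑ n ∈ Finset.Icc 1 N, f x * ∏ j, f ((T j ^ a j n) x) := by
      intro x
      simp only [hA_def]
      rw [← mul_assoc, mul_comm (f x) ((N : ℝ)⁻¹), mul_assoc, Finset.mul_sum]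
    rw [show (fun x => f x * A N x)
      = fun x => (N : ℝ)⁻¹ * ∑ n ∈ Finset.Icc 1 N, f x * ∏ j, f ((T j ^ a j n) x)
      from funext h1]
    rw [integral_const_mul, integral_finset_sum _ fun n _ => hintn n]
    congr 1
    exact Finset.sum_congr rfl fun n _ => hveq n
  set L : ℝ := ∫ x, f x * gg x ∂μ with hL_def
  have hsubint : ∀ N, Integrable (fun x => A N x - gg x) μ := fun N => (hAint N).sub hggint
  have hsubbd : ∀ N, ∀ᵐ x ∂μ, ‖A N x - gg x‖ ≤ 2 := by
    intro N
    filter_upwards [hggbd] with x hx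
    rw [Real.norm_eq_abs]
    have := hAbd N x
    rw [abs_le] at this ⊢
    constructor <;> [linarith [this.1, hx.2]; linarith [this.2, hx.1]]
  have hsubtop : ∀ N, eLpNorm (fun x => A N x - gg x) 2 μ ≠ ⊤ := by
    intro N
    refine ((eLpNorm_le_of_ae_bound (hsubbd N)).trans_lt ?_).ne
    rw [measure_univ]
    simp [ENNReal.ofReal_lt_top]
  have hfAint : ∀ N, Integrable (fun x => f x * A N x) μ := by
    intro N
    refine Integrable.bdd_mul (hAint N) hfmeas.aestronglyMeasurable (c := 1) (Filter.Eventually.of_forall fun x => by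
      simpa using hfbd x)
  have hfggint : Integrable (fun x => f x * gg x) μ :=
    Integrable.bdd_mul hggint hfmeas.aestronglyMeasurable (c := 1) (Filter.Eventually.of_forall fun x => by simpa using hfbd x)
  have hfsubint : ∀ N, Integrable (fun x => f x * (A N x - gg x)) μ := fun N =>
    Integrable.bdd_mul (hsubint N) hfmeas.aestronglyMeasurable (c := 1) (Filter.Eventually.of_forall fun x => by
      simpa using hfbd x)
  have hbound : ∀ N : ℕ, |(N : ℝ)⁻¹ * ∑ n ∈ Finset.Icc 1 N, v n - L|
      ≤ (eLpNorm (fun x => A N x - gg x) 2 μ).toReal := by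
    intro N
    rw [← havg N, hL_def]
    have h1 : ∫ x, f x * A N x ∂μ - ∫ x, f x * gg x ∂μ
        = ∫ x, f x * (A N x - gg x) ∂μ := by
      rw [← integral_sub (hfAint N) hfggint]
      congr 1
      funext x
      ring
    rw [h1]
    calc |∫ x, f x * (A N x - gg x) ∂μ| ≤ ∫ x, ‖f x * (A N x - gg x)‖ ∂μ :=
          by rw [← Real.norm_eq_abs]; exact norm_integral_le_integral_norm _
      _ ≤ ∫ x, ‖A N x - gg x‖ ∂μ := by
          refine integral_mono (hfsubint N).norm (hsubint N).norm fun x => ?_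
          rw [Real.norm_eq_abs, Real.norm_eq_abs, abs_mul]
          calc |f x| * |A N x - gg x| ≤ 1 * |A N x - gg x| := by
                gcongr; exact hfbd x
            _ = |A N x - gg x| := one_mul _
      _ = (eLpNorm (fun x => A N x - gg x) 1 μ).toReal := by
          rw [integral_norm_eq_lintegral_enorm (hsubint N).aestronglyMeasurable,
            eLpNorm_one_eq_lintegral_enorm]
      _ ≤ (eLpNorm (fun x => A N x - gg x) 2 μ).toReal :=
          ENNReal.toReal_mono (hsubtop N)
            (eLpNorm_le_eLpNorm_of_exponent_le one_le_two (hsubint N).aestronglyMeasurable)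
  have hcon' : Tendsto (fun N : ℕ => eLpNorm (fun x => A N x - gg x) 2 μ) atTop (𝓝 0) := hcon
  have htoReal : Tendsto (fun N : ℕ => (eLpNorm (fun x => A N x - gg x) 2 μ).toReal)
      atTop (𝓝 0) := by
    have := (ENNReal.tendsto_toReal (by simp : (0 : ℝ≥0∞) ≠ ⊤)).comp hcon'
    exact this
  have htends : Tendsto (fun N : ℕ => (N : ℝ)⁻¹ * ∑ n ∈ Finset.Icc 1 N, v n) atTop (𝓝 L) := by
    rw [tendsto_iff_dist_tendsto_zero]
    exact squeeze_zero (fun N => dist_nonneg)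
      (fun N => by rw [Real.dist_eq]; exact hbound N) htoReal
  -- lower bound
  have hL_ge : (μ E).toReal ^ (ℓ + 1) ≤ L := by
    set Λ : ℝ≥0∞ := ∫⁻ x, ENNReal.ofReal (f x) * ∏ j, ENNReal.ofReal (g j x) ∂μ with hΛ_def
    have hchu : μ E ^ (ℓ + 1) ≤ Λ := hchu0
    have hΛle : Λ ≤ 1 := by
      have hle : ∀ᵐ x ∂μ, ENNReal.ofReal (f x) * ∏ j, ENNReal.ofReal (g j x) ≤ 1 := by
        filter_upwards [ae_all_iff.mpr hgle1] with x hx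
        have h1 : ENNReal.ofReal (f x) ≤ 1 := by
          rcases hf01 x with h | h <;> simp [h]
        have h2 : ∏ j, ENNReal.ofReal (g j x) ≤ 1 :=
          Finset.prod_le_one (fun j _ => zero_le) (fun j _ => by
            calc ENNReal.ofReal (g j x) ≤ ENNReal.ofReal 1 :=
                  ENNReal.ofReal_le_ofReal (hx j)
              _ = 1 := ENNReal.ofReal_one)
        calc ENNReal.ofReal (f x) * ∏ j, ENNReal.ofReal (g j x) ≤ 1 * 1 :=
              mul_le_mul' h1 h2
          _ = 1 := one_mul 1
      calc Λ ≤ ∫⁻ _, 1 ∂μ := lintegral_mono_ae hle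
        _ = 1 := by simp
    have hΛtop : Λ ≠ ⊤ := (lt_of_le_of_lt hΛle one_lt_top).ne
    have hLΛ : L = Λ.toReal := by
      rw [hL_def, integral_eq_lintegral_of_nonneg_ae]
      · congr 1
        apply lintegral_congr_ae
        filter_upwards [ae_all_iff.mpr hgnn] with x hx
        rw [ENNReal.ofReal_mul (hfnn x), hgg_def]
        congr 1
        exact ENNReal.ofReal_prod_of_nonneg (fun j _ => hx j)
      · filter_upwards [hggbd] with x hx
        exact mul_nonneg (hfnn x) hx.1
      · exact (hfmeas.mul hggmeas).aestronglyMeasurable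
    rw [hLΛ]
    have h2 := ENNReal.toReal_mono hΛtop hchu
    rwa [ENNReal.toReal_pow] at h2
  refine ⟨⟨L, htends, hL_ge⟩, ?_⟩
  -- density part
  intro ε hε
  set c' : ℝ := (μ E).toReal ^ (ℓ + 1) with hc'_def
  show 0 < upperDensityNat {n : ℕ | c' - ε ≤ v n}
  set B : Set ℕ := {n : ℕ | c' - ε ≤ v n} with hB_def
  have hcard : ∀ N : ℕ, (Nat.card {n : ℕ // n ∈ B ∧ 1 ≤ n ∧ n ≤ N} : ℝ)
      = (((Finset.Icc 1 N).filter (· ∈ B)).card : ℝ) := by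
    intro N
    have hset : {n : ℕ | n ∈ B ∧ 1 ≤ n ∧ n ≤ N}
        = ↑((Finset.Icc 1 N).filter (· ∈ B)) := by
      ext n
      simp only [Set.mem_setOf_eq, Finset.coe_filter, Finset.mem_Icc]
      tauto
    have : Nat.card {n : ℕ // n ∈ B ∧ 1 ≤ n ∧ n ≤ N}
        = ((Finset.Icc 1 N).filter (· ∈ B)).card := by
      rw [show {n : ℕ // n ∈ B ∧ 1 ≤ n ∧ n ≤ N}
        = ↥{n : ℕ | n ∈ B ∧ 1 ≤ n ∧ n ≤ N} from rfl, Nat.card_coe_set_eq, hset,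
        Set.ncard_coe_finset]
    rw [this]
  set u : ℕ → ℝ := fun N => (Nat.card {n : ℕ // n ∈ B ∧ 1 ≤ n ∧ n ≤ N} : ℝ) / N with hu_def
  have hu01 : ∀ N, 0 ≤ u N ∧ u N ≤ 1 := by
    intro N
    constructor
    · rw [hu_def]; positivity
    · rcases Nat.eq_zero_or_pos N with hN | hN
      · simp [hu_def, hN]
      · have hNpos : (0 : ℝ) < N := by exact_mod_cast hN
        rw [hu_def]
        simp only
        rw [hcard N, div_le_one hNpos]
        calc (((Finset.Icc 1 N).filter (· ∈ B)).card : ℝ)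
            ≤ ((Finset.Icc 1 N).card : ℝ) := by
              exact_mod_cast Finset.card_filter_le _ _
          _ = N := by rw [Nat.card_Icc]; simp
  have hbddu : IsBoundedUnder (· ≤ ·) atTop u :=
    isBoundedUnder_of ⟨1, fun N => (hu01 N).2⟩
  suffices h : ∃ δ > 0, ∀ᶠ N in atTop, δ ≤ u N by
    obtain ⟨δ, hδ, hev⟩ := h
    have h2 : δ ≤ limsup u atTop := le_limsup_of_frequently_le hev.frequently hbddu
    have h3 : upperDensityNat B = limsup u atTop := rfl
    rw [h3]
    exact lt_of_lt_of_le hδ h2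
  by_cases hcase : c' - ε ≤ 0
  · refine ⟨1/2, by norm_num, ?_⟩
    have hBuniv : ∀ n, n ∈ B := fun n => le_trans hcase (hv01 n).1
    filter_upwards [eventually_ge_atTop 1] with N hN
    have hNpos : (0 : ℝ) < N := by exact_mod_cast hN
    have hu1 : u N = 1 := by
      rw [hu_def]
      simp only
      rw [hcard N, Finset.filter_true_of_mem (fun n _ => hBuniv n), Nat.card_Icc]
      simp only [Nat.add_sub_cancel]
      field_simp
    rw [hu1]
    norm_num
  · push_neg at hcase
    refine ⟨ε / 2, by positivity, ?_⟩
    have h1 : ∀ᶠ N : ℕ in atTop, L - ε / 2 < (N : ℝ)⁻¹ * ∑ n ∈ Finset.Icc 1 N, v n :=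
      htends.eventually (eventually_gt_nhds (by linarith : L - ε / 2 < L))
    filter_upwards [h1, eventually_ge_atTop 1] with N havgN hN1
    have hNpos : (0 : ℝ) < N := by exact_mod_cast hN1
    have hsum_le : ∑ n ∈ Finset.Icc 1 N, v n
        ≤ N * (c' - ε) + (((Finset.Icc 1 N).filter (· ∈ B)).card : ℝ) := by
      calc ∑ n ∈ Finset.Icc 1 N, v n
          ≤ ∑ n ∈ Finset.Icc 1 N, ((c' - ε) + if n ∈ B then (1 : ℝ) else 0) := by
            refine Finset.sum_le_sum fun n _ => ?_
            by_cases hn : n ∈ B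
            · simp only [hn, if_true]
              linarith [(hv01 n).2]
            · simp only [hn, if_false, add_zero]
              have : ¬ (c' - ε ≤ v n) := hn
              linarith [not_le.mp this]
        _ = N * (c' - ε) + (((Finset.Icc 1 N).filter (· ∈ B)).card : ℝ) := by
            rw [Finset.sum_add_distrib, Finset.sum_const, Finset.sum_boole, Nat.card_Icc,
              Nat.add_sub_cancel, nsmul_eq_mul]
    have h2 : (N : ℝ)⁻¹ * ∑ n ∈ Finset.Icc 1 N, v n ≤ (c' - ε) + u N := by
      rw [hu_def]
      simp only
      rw [hcard N]
      calc (N : ℝ)⁻¹ * ∑ n ∈ Finset.Icc 1 N, v n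
          ≤ (N : ℝ)⁻¹ * (N * (c' - ε) + (((Finset.Icc 1 N).filter (· ∈ B)).card : ℝ)) := by
            exact mul_le_mul_of_nonneg_left hsum_le (by positivity)
        _ = (c' - ε) + (((Finset.Icc 1 N).filter (· ∈ B)).card : ℝ) / N := by
            field_simp
    linarith [hL_ge]
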